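/- Exact one-step drift of rooted subgraph counts under Glauber dynamics: for every graph X on [n], every edge e of K_n, and every graph G with edge set E(G), if X(1) denotes the state after one step of the Glauber dynamics started from X, then E[N_G(X(1), e) − N_G(X, e)] = C(n,2)^{−1}·[ −(|E(G)|−1)·N_G(X,e) + Σ_{e'≠e} N_G(X, e, e')·exp(∂_{e'}H(X))/(1+exp(∂_{e'}H(X))) ], where the sum is over edges e' of K_n distinct from e. -/
import Mathlib


open Finset

open scoped Classical

noncomputable section

/-- The set of edges of the complete graph `K_n` on vertex set `[n] = Fin n`:
unordered pairs of distinct vertices. -/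
abbrev EdgeK (n : ℕ) : Type := {e : Sym2 (Fin n) // ¬ e.IsDiag}

/-- A graph on `[n]`, identified with an element `X ∈ {0,1}^{E(K_n)}`. -/
abbrev Config (n : ℕ) : Type := EdgeK n → Bool

/-- The image of an edge under an injection of vertex sets. -/
def mapEdge {m n : ℕ} (v : Fin m ↪ Fin n) (a : EdgeK m) : EdgeK n :=
  ⟨a.1.map v, fun h => a.2 ((Sym2.isDiag_map v.injective).mp h)⟩

/-- The complete graph `K_n` as a configuration. -/
def fullConfig (n : ℕ) : Config n := fun _ => true

/-- `X ∪ {e}`. -/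
def addEdge {n : ℕ} (X : Config n) (e : EdgeK n) : Config n :=
  fun f => if f = e then true else X f

/-- `X_{e+}` (for `b = true`), resp. `X_{e-}` (for `b = false`). -/
def setEdge {n : ℕ} (X : Config n) (e : EdgeK n) (b : Bool) : Config n :=
  fun f => if f = e then b else X f

/-- `N_G(X)`: the number of tuples of `m` distinct vertices of `[n]` such that every
edge of the pattern graph `G` (a graph on `m` labelled vertices) is mapped to an edge of `X`. -/
def copyCount {n m : ℕ} (X : Config n) (G : Finset (EdgeK m)) : ℕ :=
  (univ.filter fun v : Fin m ↪ Fin n => ∀ a ∈ G, X (mapEdge v a) = true).card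

/-- `N_G(X, e)`: the number of such tuples for `X ∪ {e}` which moreover use the edge `e`. -/
def rootedCount {n m : ℕ} (X : Config n) (G : Finset (EdgeK m)) (e : EdgeK n) : ℕ :=
  (univ.filter fun v : Fin m ↪ Fin n =>
    (∃ a ∈ G, mapEdge v a = e) ∧ ∀ a ∈ G, addEdge X e (mapEdge v a) = true).card

/-- `N_G(X, e, e')`: the number of such tuples for `X ∪ {e, e'}` which use both `e` and `e'`. -/
def rooted2Count {n m : ℕ} (X : Config n) (G : Finset (EdgeK m)) (e e' : EdgeK n) : ℕ :=
  (univ.filter fun v : Fin m ↪ Fin n =>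
    (∃ a ∈ G, mapEdge v a = e) ∧ (∃ a ∈ G, mapEdge v a = e') ∧
      ∀ a ∈ G, addEdge (addEdge X e) e' (mapEdge v a) = true).card

/-- The number of edges of the graph `X`. -/
def edgeCount {n : ℕ} (X : Config n) : ℕ := (univ.filter fun e => X e = true).card

/-- Hamming distance between two graphs: the number of edges of disagreement. -/
def hamDist {n : ℕ} (X Y : Config n) : ℕ := (univ.filter fun f => X f ≠ Y f).card

/-- The Hamiltonian `H(X) = ∑ i, β i * N_{G_i}(X) / n^(|V_i| - 2)`. -/
def ergmH {s : ℕ} (V : Fin s → ℕ) (Pt : ∀ i, Finset (EdgeK (V i))) (β : Fin s → ℝ)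
    (n : ℕ) (X : Config n) : ℝ :=
  ∑ i, β i * (copyCount X (Pt i) : ℝ) / (n : ℝ) ^ (V i - 2)

/-- The Gibbs measure `p_n(X) = exp(H(X)) / Z_n`. -/
def gibbs {s : ℕ} (V : Fin s → ℕ) (Pt : ∀ i, Finset (EdgeK (V i))) (β : Fin s → ℝ)
    (n : ℕ) (X : Config n) : ℝ :=
  Real.exp (ergmH V Pt β n X) / ∑ Y : Config n, Real.exp (ergmH V Pt β n Y)

/-- `∂_e H(X) = H(X_{e+}) - H(X_{e-})`. -/
def dH {s : ℕ} (V : Fin s → ℕ) (Pt : ∀ i, Finset (EdgeK (V i))) (β : Fin s → ℝ)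
    (n : ℕ) (X : Config n) (e : EdgeK n) : ℝ :=
  ergmH V Pt β n (setEdge X e true) - ergmH V Pt β n (setEdge X e false)

/-- The transition kernel of the Glauber dynamics: a uniformly random edge `e` of `K_n` is
chosen and set present with probability `exp(∂_e H(X)) /(1 + exp(∂_e H(X)))`, absent
otherwise. -/
def glauber {s : ℕ} (V : Fin s → ℕ) (Pt : ∀ i, Finset (EdgeK (V i))) (β : Fin s → ℝ)
    (n : ℕ) (X Y : Config n) : ℝ :=
  ((n.choose 2 : ℝ))⁻¹ * ∑ e : EdgeK n,
    ((if Y = setEdge X e true then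
        Real.exp (dH V Pt β n X e) / (1 + Real.exp (dH V Pt β n X e)) else 0)
      + (if Y = setEdge X e false then 1 / (1 + Real.exp (dH V Pt β n X e)) else 0))

/-- The `t`-step distribution of the Markov chain with one-step kernel `K`,
started from a given state. -/
def kernelStep {n : ℕ} (K : Config n → Config n → ℝ) : ℕ → Config n → Config n → ℝ
  | 0 => fun x y => if y = x then 1 else 0
  | (t+1) => fun x y => ∑ z, kernelStep K t x z * K z y

/-- Total variation distance between two (signed) distributions on `Config n`. -/
def tvDist {n : ℕ} (μ ν : Config n → ℝ) : ℝ := (∑ Y, |μ Y - ν Y|) / 2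

/-- `mixes K π t` says that after `t` steps the chain with kernel `K` is within total
variation distance `e⁻¹` of `π` from every starting state. -/
def mixes {n : ℕ} (K : Config n → Config n → ℝ) (π : Config n → ℝ) (t : ℕ) : Prop :=
  ∀ x, tvDist (kernelStep K t x) π ≤ Real.exp (-1)

/-- The mixing time: the least `t` such that from every starting state the chain is within
total variation distance `e⁻¹` of `π`. -/
def mixingTime {n : ℕ} (K : Config n → Config n → ℝ) (π : Config n → ℝ) : ℕ :=
  sInf {t | mixes K π t}

/-- `Ψ(p) = ∑ i, 2 β_i |E_i| p^(|E_i| - 1)`. -/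
def PsiF {s : ℕ} {V : Fin s → ℕ} (Pt : ∀ i, Finset (EdgeK (V i))) (β : Fin s → ℝ)
    (p : ℝ) : ℝ :=
  ∑ i, 2 * β i * ((Pt i).card : ℝ) * p ^ ((Pt i).card - 1)

/-- `φ(p) = exp(Ψ(p)) / (1 + exp(Ψ(p)))`. -/
def phiF {s : ℕ} {V : Fin s → ℕ} (Pt : ∀ i, Finset (EdgeK (V i))) (β : Fin s → ℝ)
    (p : ℝ) : ℝ :=
  Real.exp (PsiF Pt β p) / (1 + Real.exp (PsiF Pt β p))

/-- High temperature phase: `φ(p) = p` has a unique solution `p*` (in `[0,1]`), which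
moreover satisfies `φ'(p*) < 1`. -/
def HighTemp {s : ℕ} {V : Fin s → ℕ} (Pt : ∀ i, Finset (EdgeK (V i))) (β : Fin s → ℝ)
    (pstar : ℝ) : Prop :=
  pstar ∈ Set.Icc (0:ℝ) 1 ∧ phiF Pt β pstar = pstar ∧
    (∀ q ∈ Set.Icc (0:ℝ) 1, phiF Pt β q = q → q = pstar) ∧
    deriv (phiF Pt β) pstar < 1

/-- Low temperature phase: `φ(p) = p` has at least two solutions `p` with `φ'(p) < 1`. -/
def LowTemp {s : ℕ} {V : Fin s → ℕ} (Pt : ∀ i, Finset (EdgeK (V i))) (β : Fin s → ℝ) : Prop :=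
  ∃ p₁ p₂ : ℝ, p₁ ∈ Set.Icc (0:ℝ) 1 ∧ p₂ ∈ Set.Icc (0:ℝ) 1 ∧ p₁ ≠ p₂ ∧
    phiF Pt β p₁ = p₁ ∧ phiF Pt β p₂ = p₂ ∧
    deriv (phiF Pt β) p₁ < 1 ∧ deriv (phiF Pt β) p₂ < 1

/-- `r_G(X, e) = (N_G(X,e) / (2 |E(G)| n^(|V(G)|-2)))^(1/(|E(G)|-1))`. -/
def rG {n m : ℕ} (X : Config n) (G : Finset (EdgeK m)) (e : EdgeK n) : ℝ :=
  ((rootedCount X G e : ℝ) / (2 * (G.card : ℝ) * (n : ℝ) ^ (m - 2))) ^ (((G.card : ℝ) - 1)⁻¹)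

/-- The set of values `r_G(X,e)` over all edges `e` of `K_n` and all graphs `G` on at
most `L` vertices with at least two edges. -/
def rSet (L n : ℕ) (X : Config n) : Set ℝ :=
  {r | ∃ m, m ≤ L ∧ ∃ G : Finset (EdgeK m), 2 ≤ G.card ∧ ∃ e : EdgeK n, r = rG X G e}

/-- `r̄(X)`: the maximum of `r_G(X,e)` over all edges `e` of `K_n` and all graphs `G` on
at most `L` vertices with at least two edges. -/
def rbar (L n : ℕ) (X : Config n) : ℝ := sSup (rSet L n X)

/-- `r_min(X)`: the corresponding minimum. -/
def rmin (L n : ℕ) (X : Config n) : ℝ := sInf (rSet L n X)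

/-- The cycle `C_l` on `l` labelled vertices, as a pattern graph. -/
def cyclePattern (l : ℕ) [NeZero l] : Finset (EdgeK l) :=
  univ.filter fun e => ∃ i : Fin l, e.1 = s(i, i + 1)

/-- The probability of a length-`T` trajectory `w` for the chain with kernel `K`
started at `x`. -/
def trajProb {n T : ℕ} (K : Config n → Config n → ℝ) (x : Config n)
    (w : Fin (T+1) → Config n) : ℝ :=
  (if w 0 = x then 1 else 0) * ∏ i : Fin T, K (w i.castSucc) (w i.succ)

/-- Two edges of `K_n` share a vertex. -/
def sharesVertex {n : ℕ} (e e' : EdgeK n) : Prop := ∃ v, v ∈ e.1 ∧ v ∈ e'.1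

end


section AuxDrift

open Finset

variable {n m : ℕ}

lemma mapEdge_inj (v : Fin m ↪ Fin n) : Function.Injective (mapEdge v) := by
  intro a b h
  exact Subtype.ext (Sym2.map.injective v.injective (congrArg Subtype.val h))

lemma addEdge_setEdge_self (X : Config n) (e : EdgeK n) (b : Bool) :
    addEdge (setEdge X e b) e = addEdge X e := by
  funext f; by_cases h : f = e <;> simp [addEdge, setEdge, h]

lemma addEdge_setEdge_true (X : Config n) (e e' : EdgeK n) :
    addEdge (setEdge X e' true) e = addEdge (addEdge X e) e' := by
  funext f; by_cases h : f = e <;> by_cases h' : f = e' <;> simp [addEdge, setEdge, h, h']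

lemma addEdge_setEdge_false (X : Config n) (e e' : EdgeK n) (f : EdgeK n) (hf : f ≠ e') :
    addEdge (setEdge X e' false) e f = addEdge X e f := by
  by_cases h : f = e <;> simp [addEdge, setEdge, h, hf]

lemma addEdge_addEdge_ne (X : Config n) (e e' : EdgeK n) (f : EdgeK n) (hf : f ≠ e') :
    addEdge (addEdge X e) e' f = addEdge X e f := by
  simp [addEdge, hf]

/-- count of tuples using `e`, NOT using `e'`, all edges in `X ∪ {e}` -/
noncomputable def cntA (X : Config n) (G : Finset (EdgeK m)) (e e' : EdgeK n) : ℕ :=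
  (univ.filter fun v : Fin m ↪ Fin n =>
    ((∃ a ∈ G, mapEdge v a = e) ∧ ∀ a ∈ G, addEdge X e (mapEdge v a) = true)
      ∧ ¬ (∃ a ∈ G, mapEdge v a = e')).card

/-- count of tuples using `e` and `e'`, all edges in `X ∪ {e}` -/
noncomputable def cntB (X : Config n) (G : Finset (EdgeK m)) (e e' : EdgeK n) : ℕ :=
  (univ.filter fun v : Fin m ↪ Fin n =>
    ((∃ a ∈ G, mapEdge v a = e) ∧ ∀ a ∈ G, addEdge X e (mapEdge v a) = true)
      ∧ (∃ a ∈ G, mapEdge v a = e')).card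

lemma card_split (p q : (Fin m ↪ Fin n) → Prop) [DecidablePred p]
    [DecidablePred fun v => p v ∧ q v] [DecidablePred fun v => p v ∧ ¬ q v] :
    (univ.filter p).card =
      (univ.filter fun v => p v ∧ q v).card + (univ.filter fun v => p v ∧ ¬ q v).card := by
  rw [← Finset.card_union_of_disjoint (by
    simp only [Finset.disjoint_left, Finset.mem_filter]
    tauto)]
  congr 1
  ext v
  simp only [Finset.mem_filter, Finset.mem_union, Finset.mem_univ, true_and]
  tauto

lemma rootedCount_eq_B_add_A (X : Config n) (G : Finset (EdgeK m)) (e e' : EdgeK n) :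
    rootedCount X G e = cntB X G e e' + cntA X G e e' := by
  rw [rootedCount, cntA, cntB]
  exact card_split (fun v => (∃ a ∈ G, mapEdge v a = e) ∧
      ∀ a ∈ G, addEdge X e (mapEdge v a) = true) (fun v => ∃ a ∈ G, mapEdge v a = e')

lemma rootedCount_setEdge_self (X : Config n) (G : Finset (EdgeK m)) (e : EdgeK n) (b : Bool) :
    rootedCount (setEdge X e b) G e = rootedCount X G e := by
  rw [rootedCount, rootedCount, addEdge_setEdge_self]

lemma rooted_false (X : Config n) (G : Finset (EdgeK m)) (e e' : EdgeK n) (h : e' ≠ e) :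
    rootedCount (setEdge X e' false) G e = cntA X G e e' := by
  rw [rootedCount, cntA]
  congr 1
  apply Finset.filter_congr
  intro v _
  constructor
  · rintro ⟨he, hall⟩
    have hne : ¬ ∃ a ∈ G, mapEdge v a = e' := by
      rintro ⟨a, ha, hma⟩
      have h2 := hall a ha
      rw [hma] at h2
      simp [addEdge, setEdge, h] at h2
    refine ⟨⟨he, fun a ha => ?_⟩, hne⟩
    rw [← addEdge_setEdge_false X e e' _ (fun hc => hne ⟨a, ha, hc⟩)]
    exact hall a ha
  · rintro ⟨⟨he, hall⟩, hne⟩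
    exact ⟨he, fun a ha => by
      rw [addEdge_setEdge_false X e e' _ (fun hc => hne ⟨a, ha, hc⟩)]
      exact hall a ha⟩

lemma rooted_true (X : Config n) (G : Finset (EdgeK m)) (e e' : EdgeK n) :
    rootedCount (setEdge X e' true) G e = rooted2Count X G e e' + cntA X G e e' := by
  rw [rootedCount, addEdge_setEdge_true]
  rw [card_split (fun v => (∃ a ∈ G, mapEdge v a = e) ∧
      ∀ a ∈ G, addEdge (addEdge X e) e' (mapEdge v a) = true)
      (fun v => ∃ a ∈ G, mapEdge v a = e')]
  congr 1
  · rw [rooted2Count]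
    congr 1
    apply Finset.filter_congr
    intro v _
    tauto
  · rw [cntA]
    congr 1
    apply Finset.filter_congr
    intro v _
    constructor
    · rintro ⟨⟨he, hall⟩, hne⟩
      exact ⟨⟨he, fun a ha => by
        rw [← addEdge_addEdge_ne X e e' _ (fun hc => hne ⟨a, ha, hc⟩)]
        exact hall a ha⟩, hne⟩
    · rintro ⟨⟨he, hall⟩, hne⟩
      exact ⟨⟨he, fun a ha => by
        rw [addEdge_addEdge_ne X e e' _ (fun hc => hne ⟨a, ha, hc⟩)]
        exact hall a ha⟩, hne⟩

lemma sum_cntB (X : Config n) (G : Finset (EdgeK m)) (e : EdgeK n) :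
    ∑ e' ∈ univ.filter (fun e' : EdgeK n => e' ≠ e), cntB X G e e' =
      (G.card - 1) * rootedCount X G e := by
  have hB : ∀ e' : EdgeK n, (cntB X G e e' : ℕ) =
      ∑ v ∈ univ.filter (fun v : Fin m ↪ Fin n =>
        (∃ a ∈ G, mapEdge v a = e) ∧ ∀ a ∈ G, addEdge X e (mapEdge v a) = true),
        if ∃ a ∈ G, mapEdge v a = e' then 1 else 0 := by
    intro e'
    rw [cntB, ← Finset.filter_filter, Finset.card_filter]
  simp_rw [hB]
  rw [Finset.sum_comm]
  have inner : ∀ v ∈ univ.filter (fun v : Fin m ↪ Fin n =>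
      (∃ a ∈ G, mapEdge v a = e) ∧ ∀ a ∈ G, addEdge X e (mapEdge v a) = true),
      (∑ e' ∈ univ.filter (fun e' : EdgeK n => e' ≠ e),
        if ∃ a ∈ G, mapEdge v a = e' then 1 else 0) = G.card - 1 := by
    intro v hv
    rw [Finset.mem_filter] at hv
    obtain ⟨a₀, ha₀, hma₀⟩ := hv.2.1
    rw [← Finset.card_filter, Finset.filter_filter]
    have hset : (univ.filter fun e' : EdgeK n => e' ≠ e ∧ ∃ a ∈ G, mapEdge v a = e')
        = (G.image (mapEdge v)).erase e := by
      ext f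
      simp only [Finset.mem_filter, Finset.mem_univ, true_and, Finset.mem_erase,
        Finset.mem_image]
    rw [hset, Finset.card_erase_of_mem (Finset.mem_image.mpr ⟨a₀, ha₀, hma₀⟩),
      Finset.card_image_of_injective _ (mapEdge_inj v)]
  rw [Finset.sum_congr rfl inner, Finset.sum_const, smul_eq_mul, rootedCount, mul_comm]

lemma rootedCount_of_empty (X : Config n) (e : EdgeK n) (G : Finset (EdgeK m)) (hG : G = ∅) :
    rootedCount X G e = 0 := by
  subst hG
  simp [rootedCount]

end AuxDrift

/-- **Exact one-step drift of rooted subgraph counts under the Glauber dynamics.**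
`E[N_G(X(1),e) - N_G(X,e)] = C(n,2)⁻¹·[-(|E(G)|-1)·N_G(X,e) +
Σ_{e'≠e} N_G(X,e,e')·exp(∂_{e'}H(X))/(1+exp(∂_{e'}H(X)))]`. -/

theorem glauber_drift_identity
    {s : ℕ} (V : Fin s → ℕ) (Pt : ∀ i, Finset (EdgeK (V i))) (β : Fin s → ℝ)
    {n m : ℕ} (X : Config n) (e : EdgeK n) (G : Finset (EdgeK m)) :
    ∑ Y : Config n,
        glauber V Pt β n X Y * ((rootedCount Y G e : ℝ) - (rootedCount X G e : ℝ)) =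
      (n.choose 2 : ℝ)⁻¹ *
        (-(((G.card : ℝ) - 1) * (rootedCount X G e : ℝ)) +
          ∑ e' ∈ univ.filter (fun e' : EdgeK n => e' ≠ e),
            (rooted2Count X G e e' : ℝ) *
              (Real.exp (dH V Pt β n X e') / (1 + Real.exp (dH V Pt β n X e')))) := by
  have hpos : ∀ e' : EdgeK n, (0:ℝ) < 1 + Real.exp (dH V Pt β n X e') := fun e' => by
    have := Real.exp_pos (dH V Pt β n X e'); linarith
  -- Step 1: collapse the sum over Y
  have step1 : ∑ Y : Config n,
      glauber V Pt β n X Y * ((rootedCount Y G e : ℝ) - (rootedCount X G e : ℝ)) =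
      (n.choose 2 : ℝ)⁻¹ * ∑ e' : EdgeK n,
        (Real.exp (dH V Pt β n X e') / (1 + Real.exp (dH V Pt β n X e')) *
          ((rootedCount (setEdge X e' true) G e : ℝ) - (rootedCount X G e : ℝ))
        + 1 / (1 + Real.exp (dH V Pt β n X e')) *
          ((rootedCount (setEdge X e' false) G e : ℝ) - (rootedCount X G e : ℝ))) := by
    simp only [glauber, mul_assoc, ← Finset.mul_sum]
    congr 1
    simp_rw [Finset.sum_mul]
    rw [Finset.sum_comm]
    apply Finset.sum_congr rfl
    intro e' _
    simp [add_mul, ite_mul, Finset.sum_add_distrib, Finset.sum_ite_eq']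
  rw [step1]
  congr 1
  -- Step 2: split off e' = e
  rw [← Finset.sum_filter_add_sum_filter_not univ (fun e' : EdgeK n => e' = e)]
  have h1 : ∑ e' ∈ univ.filter (fun e' : EdgeK n => e' = e),
      (Real.exp (dH V Pt β n X e') / (1 + Real.exp (dH V Pt β n X e')) *
        ((rootedCount (setEdge X e' true) G e : ℝ) - (rootedCount X G e : ℝ))
      + 1 / (1 + Real.exp (dH V Pt β n X e')) *
        ((rootedCount (setEdge X e' false) G e : ℝ) - (rootedCount X G e : ℝ))) = 0 := by
    apply Finset.sum_eq_zero
    intro e' he'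
    rw [Finset.mem_filter] at he'
    rw [he'.2, rootedCount_setEdge_self, rootedCount_setEdge_self]
    ring
  rw [h1, zero_add]
  -- Step 3: per-term identity on e' ≠ e
  have h2 : ∀ e' ∈ univ.filter (fun e' : EdgeK n => ¬ e' = e),
      (Real.exp (dH V Pt β n X e') / (1 + Real.exp (dH V Pt β n X e')) *
        ((rootedCount (setEdge X e' true) G e : ℝ) - (rootedCount X G e : ℝ))
      + 1 / (1 + Real.exp (dH V Pt β n X e')) *
        ((rootedCount (setEdge X e' false) G e : ℝ) - (rootedCount X G e : ℝ)))
      = (rooted2Count X G e e' : ℝ) *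
          (Real.exp (dH V Pt β n X e') / (1 + Real.exp (dH V Pt β n X e')))
        - (cntB X G e e' : ℝ) := by
    intro e' he'
    rw [Finset.mem_filter] at he'
    have hne : e' ≠ e := he'.2
    rw [rooted_true X G e e', rooted_false X G e e' hne, rootedCount_eq_B_add_A X G e e']
    have hE := hpos e'
    set E := Real.exp (dH V Pt β n X e') with hEdef
    push_cast
    field_simp
    ring
  rw [Finset.sum_congr rfl h2, Finset.sum_sub_distrib]
  -- Step 4: sum of cntB
  have h3 : ∑ e' ∈ univ.filter (fun e' : EdgeK n => ¬ e' = e), (cntB X G e e' : ℝ)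
      = ((G.card : ℝ) - 1) * (rootedCount X G e : ℝ) := by
    rw [← Nat.cast_sum]
    have : ∑ e' ∈ univ.filter (fun e' : EdgeK n => ¬ e' = e), cntB X G e e'
        = (G.card - 1) * rootedCount X G e := by
      rw [← sum_cntB X G e]
    rw [this]
    rcases Nat.eq_zero_or_pos G.card with h0 | hposc
    · rw [rootedCount_of_empty X e G (Finset.card_eq_zero.mp h0)]
      simp
    · rw [Nat.cast_mul, Nat.cast_sub hposc]
      norm_num
  rw [h3]
  have h4 : (univ.filter fun e' : EdgeK n => ¬ e' = e) =
      (univ.filter fun e' : EdgeK n => e' ≠ e) := by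
    apply Finset.filter_congr
    intro f _
    tauto
  rw [h4]
  ring
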